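/- Let Ae > 0, σ₀ > 0, σ > 0, C > 0, and define Z(C) = [ −Ae/(σ²+σ₀²) + √( A²e²/(σ²+σ₀²)² − (1/(σ²+σ₀²) − 1/σ₀²)·( A²e²/(σ²+σ₀²) − 2·log(C·σ₀/√(σ²+σ₀²)) ) ) ] / ( 1/σ₀² − 1/(σ²+σ₀²) ), assuming the expression under the square root is nonnegative. Then Z(C) < Ae/2 + ( √((σ₀²+σ²)·σ₀²) / (Ae) )·| log( C·σ₀/√(σ²+σ₀²) ) | (upper-bound step of Theorem 7). -/
import Mathlib

open Real

/-- The localizing threshold value `Z(C)` of Theorem 6. -/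
noncomputable def Zfun (Ae σ σ0 C : ℝ) : ℝ :=
  (-(Ae / (σ ^ 2 + σ0 ^ 2)) +
      Real.sqrt (Ae ^ 2 / (σ ^ 2 + σ0 ^ 2) ^ 2 -
        (1 / (σ ^ 2 + σ0 ^ 2) - 1 / σ0 ^ 2) *
          (Ae ^ 2 / (σ ^ 2 + σ0 ^ 2) -
            2 * Real.log (C * σ0 / Real.sqrt (σ ^ 2 + σ0 ^ 2))))) /
    (1 / σ0 ^ 2 - 1 / (σ ^ 2 + σ0 ^ 2))

set_option maxHeartbeats 1000000 in
theorem stmt_16 (Ae σ0 σ C : ℝ) (hAe : 0 < Ae) (hσ0 : 0 < σ0) (hσ : 0 < σ) (hC : 0 < C)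
    (hrad : 0 ≤ Ae ^ 2 / (σ ^ 2 + σ0 ^ 2) ^ 2 -
      (1 / (σ ^ 2 + σ0 ^ 2) - 1 / σ0 ^ 2) *
        (Ae ^ 2 / (σ ^ 2 + σ0 ^ 2) -
          2 * Real.log (C * σ0 / Real.sqrt (σ ^ 2 + σ0 ^ 2)))) :
    Zfun Ae σ σ0 C <
      Ae / 2 + Real.sqrt ((σ0 ^ 2 + σ ^ 2) * σ0 ^ 2) / Ae *
        |Real.log (C * σ0 / Real.sqrt (σ ^ 2 + σ0 ^ 2))| := by
  have hs : (0:ℝ) < σ ^ 2 + σ0 ^ 2 := by positivity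
  have ht : (0:ℝ) < σ0 ^ 2 := by positivity
  set L := Real.log (C * σ0 / Real.sqrt (σ ^ 2 + σ0 ^ 2)) with hL
  set s := σ ^ 2 + σ0 ^ 2 with hsdef
  have hσs : σ ^ 2 = s - σ0 ^ 2 := by rw [hsdef]; ring
  have hA : Ae ^ 2 / s ^ 2 - (1 / s - 1 / σ0 ^ 2) * (Ae ^ 2 / s - 2 * L)
      = (Ae ^ 2 - 2 * σ ^ 2 * L) / (s * σ0 ^ 2) := by
    rw [hsdef]; field_simp; ring
  have hX : 0 ≤ Ae ^ 2 - 2 * σ ^ 2 * L := by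
    have h1 : 0 ≤ (Ae ^ 2 - 2 * σ ^ 2 * L) / (s * σ0 ^ 2) := hA ▸ hrad
    have h2 : Ae ^ 2 - 2 * σ ^ 2 * L
        = (Ae ^ 2 - 2 * σ ^ 2 * L) / (s * σ0 ^ 2) * (s * σ0 ^ 2) := by
      field_simp
    rw [h2]; exact mul_nonneg h1 (by positivity)
  set w := Real.sqrt (s * σ0 ^ 2) with hwdef
  have hw0 : 0 < w := Real.sqrt_pos.mpr (by positivity)
  have hw2 : w ^ 2 = s * σ0 ^ 2 := Real.sq_sqrt (by positivity)
  set x := Real.sqrt (Ae ^ 2 - 2 * σ ^ 2 * L) with hxdef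
  have hx0 : 0 ≤ x := Real.sqrt_nonneg _
  clear_value x w s L
  have hxb : Ae * x ≤ Ae ^ 2 + σ ^ 2 * |L| := by
    set B := σ ^ 2 * |L| / Ae with hB
    have hB0 : 0 ≤ B := by positivity
    have hBa : Ae * B = σ ^ 2 * |L| := by rw [hB]; field_simp
    have hmono : σ ^ 2 * (-L) ≤ σ ^ 2 * |L| :=
      mul_le_mul_of_nonneg_left (neg_le_abs L) (sq_nonneg σ)
    have hb : x ≤ Ae + B := by
      have h1 : Ae ^ 2 - 2 * σ ^ 2 * L ≤ (Ae + B) ^ 2 := by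
        nlinarith [sq_nonneg B]
      rw [hxdef]
      calc Real.sqrt (Ae ^ 2 - 2 * σ ^ 2 * L) ≤ Real.sqrt ((Ae + B) ^ 2) :=
          Real.sqrt_le_sqrt h1
        _ = Ae + B := Real.sqrt_sq (by positivity)
    nlinarith [mul_le_mul_of_nonneg_left hb hAe.le]
  have hsqrtdiv : Real.sqrt ((Ae ^ 2 - 2 * σ ^ 2 * L) / (s * σ0 ^ 2)) = x / w := by
    rw [hxdef, hwdef, Real.sqrt_div hX]
  have hd : (0:ℝ) < 1 / σ0 ^ 2 - 1 / s := by
    have h0 : σ0 ^ 2 < s := by rw [hsdef]; nlinarith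
    have h1 : 1 / s < 1 / σ0 ^ 2 := one_div_lt_one_div_of_lt ht h0
    linarith
  have hwarg : (σ0 ^ 2 + σ ^ 2) * σ0 ^ 2 = s * σ0 ^ 2 := by rw [hsdef]; ring
  have h2w : 2 * w < s + σ0 ^ 2 := by
    nlinarith [sq_nonneg (s - σ0 ^ 2), hw2, hw0, pow_pos hσ 2]
  have hZ : Zfun Ae σ σ0 C = (-(Ae / s) + x / w) / (1 / σ0 ^ 2 - 1 / s) := by
    unfold Zfun
    rw [← hsdef, ← hL, hA, hsqrtdiv]
  rw [hZ, hwarg, ← hwdef, div_lt_iff₀ hd]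
  have hdval : 1 / σ0 ^ 2 - 1 / s = σ ^ 2 / w ^ 2 := by
    rw [hw2, hsdef]; field_simp; ring
  rw [hdval, ← sub_pos]
  have expand : (Ae / 2 + w / Ae * |L|) * (σ ^ 2 / w ^ 2) - (-(Ae / s) + x / w)
      = (Ae ^ 2 * s * σ ^ 2 + 2 * s * w * σ ^ 2 * |L| + 2 * Ae ^ 2 * w ^ 2
         - 2 * Ae * s * w * x) / (2 * Ae * s * w ^ 2) := by
    field_simp
    ring
  rw [expand]
  apply div_pos _ (by positivity)
  have hspos : (0:ℝ) < s + σ0 ^ 2 - 2 * w := by linarith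
  have hN : Ae ^ 2 * s * σ ^ 2 + 2 * Ae ^ 2 * w ^ 2 - 2 * s * w * Ae ^ 2
      = Ae ^ 2 * s * (s + σ0 ^ 2 - 2 * w) := by rw [hσs, hw2]; ring
  nlinarith [mul_le_mul_of_nonneg_left hxb (by positivity : (0:ℝ) ≤ 2 * s * w),
    mul_pos (mul_pos (pow_pos hAe 2) hs) hspos, hN]
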